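/- Let i : S → T and j : T → V be embeddings of ordered trees, and let x ∈ ℓ(S), y ∈ ℓ(T), z ∈ ℓ(V) be leaves. If y is i-conjugate to x and z is j-conjugate to y, then z is (j ∘ i)-conjugate to x. -/

import Mathlib

/-- An ordered tree: a finite poset (`tle`, the tree order `⊑`) with a root,
linearly ordered predecessor sets, binary meets, together with a linear order
`lin` (the lexicographic order `≤`) extending the tree order and coherent with
the tree structure (determined on subtrees above incomparable vertices). -/
structure OTree (α : Type) [Finite α] where
  tle : α → α → Prop
  tle_refl : ∀ v, tle v v
  tle_trans : ∀ u v w, tle u v → tle v w → tle u w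
  tle_antisymm : ∀ v w, tle v w → tle w v → v = w
  root : α
  root_le : ∀ v, tle root v
  pred_chain : ∀ v x y, tle x v → tle y v → tle x y ∨ tle y x
  meet : α → α → α
  meet_le_left : ∀ v w, tle (meet v w) v
  meet_le_right : ∀ v w, tle (meet v w) w
  le_meet : ∀ x v w, tle x v → tle x w → tle x (meet v w)
  lin : α → α → Prop
  lin_refl : ∀ v, lin v v
  lin_trans : ∀ u v w, lin u v → lin v w → lin u w
  lin_antisymm : ∀ v w, lin v w → lin w v → v = w
  lin_total : ∀ v w, lin v w ∨ lin w v
  tle_lin : ∀ v w, tle v w → lin v w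
  lex_coh : ∀ v w v' w', tle v v' → tle w w' → ¬ tle v w → ¬ tle w v → (lin v' w' ↔ lin v w)

variable {α β γ : Type} [Finite α] [Finite β] [Finite γ]

/-- A morphism of ordered trees: preserves meets, the lexicographic order, and the root. -/
def IsMorphism (S : OTree α) (T : OTree β) (e : α → β) : Prop :=
  (∀ v w, e (S.meet v w) = T.meet (e v) (e w)) ∧
  (∀ v w, S.lin v w → T.lin (e v) (e w)) ∧
  e S.root = T.root

/-- An embedding is an injective morphism. -/
def IsEmbedding (S : OTree α) (T : OTree β) (e : α → β) : Prop :=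
  IsMorphism S T e ∧ Function.Injective e

/-- `e` witnesses that `f : T → S` is a rigid surjection: `e` is a morphism with
`f ∘ e = id_S` and `e ∘ f ⊑_T id_T` pointwise.  Such `e` is called the injection of `f`. -/
def IsInjectionOf (T : OTree β) (S : OTree α) (f : β → α) (e : α → β) : Prop :=
  IsMorphism S T e ∧ (∀ v, f (e v) = v) ∧ (∀ w, T.tle (e (f w)) w)

/-- `f : T → S` is a rigid surjection. -/
def IsRigidSurj (T : OTree β) (S : OTree α) (f : β → α) : Prop :=
  ∃ e, IsInjectionOf T S f e

/-- `e` maps the `≤_S`-largest vertex (= largest leaf) of `S` to the `≤_T`-largest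
vertex of `T`. -/
def IsSealedInj (T : OTree β) (S : OTree α) (e : α → β) : Prop :=
  ∀ s t, (∀ v, S.lin v s) → (∀ w, T.lin w t) → e s = t

/-- A sealed rigid surjection. -/
def IsSealedRS (T : OTree β) (S : OTree α) (f : β → α) : Prop :=
  ∃ e, IsInjectionOf T S f e ∧ IsSealedInj T S e

/-- The initial subtree `T^v = {w : w ≤_T v}`. -/
def OTree.initSeg (T : OTree β) (v : β) : Set β := {w | T.lin w v}

/-- Restriction of an ordered tree to a nonempty `⊑`-downward closed subset. -/
def OTree.restrict (T : OTree β) (T' : Set β) (hne : T'.Nonempty)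
    (hdc : ∀ v w, T.tle v w → w ∈ T' → v ∈ T') : OTree T' where
  tle v w := T.tle v.1 w.1
  tle_refl v := T.tle_refl v.1
  tle_trans u v w h1 h2 := T.tle_trans u.1 v.1 w.1 h1 h2
  tle_antisymm v w h1 h2 := Subtype.ext (T.tle_antisymm v.1 w.1 h1 h2)
  root := ⟨T.root, hdc T.root hne.some (T.root_le hne.some) hne.some_mem⟩
  root_le v := T.root_le v.1
  pred_chain v x y h1 h2 := T.pred_chain v.1 x.1 y.1 h1 h2
  meet v w := ⟨T.meet v.1 w.1, hdc (T.meet v.1 w.1) v.1 (T.meet_le_left v.1 w.1) v.2⟩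
  meet_le_left v w := T.meet_le_left v.1 w.1
  meet_le_right v w := T.meet_le_right v.1 w.1
  le_meet x v w h1 h2 := T.le_meet x.1 v.1 w.1 h1 h2
  lin v w := T.lin v.1 w.1
  lin_refl v := T.lin_refl v.1
  lin_trans u v w h1 h2 := T.lin_trans u.1 v.1 w.1 h1 h2
  lin_antisymm v w h1 h2 := Subtype.ext (T.lin_antisymm v.1 w.1 h1 h2)
  lin_total v w := T.lin_total v.1 w.1
  tle_lin v w h := T.tle_lin v.1 w.1 h
  lex_coh v w v' w' h1 h2 h3 h4 := T.lex_coh v.1 w.1 v'.1 w'.1 h1 h2 h3 h4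

/-- The initial subtree `T^v` as an ordered tree. -/
def OTree.init (T : OTree β) (v : β) : OTree (T.initSeg v) :=
  T.restrict (T.initSeg v) ⟨v, T.lin_refl v⟩
    (fun a b hab hb => T.lin_trans a b v (T.tle_lin a b hab) hb)

/-- A leaf: a `⊑`-maximal vertex. -/
def OTree.Leaf (T : OTree β) (y : β) : Prop := ∀ w, T.tle y w → w = y

/-- Strict lexicographic order. -/
def linLt (T : OTree β) (v w : β) : Prop := T.lin v w ∧ v ≠ w

/-- `y` is `i`-conjugate to `x` (for leaves `x` of `S`, `y` of `T`). -/
def Conj (S : OTree α) (T : OTree β) (i : α → β) (x : α) (y : β) : Prop :=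
  S.Leaf x ∧ T.Leaf y ∧
  (((∀ z, S.Leaf z → S.lin z x) ∧ (∀ z, T.Leaf z → T.lin z y)) ∨
   (∃ x', S.Leaf x' ∧ linLt S x x' ∧ (∀ z, S.Leaf z → linLt S x z → S.lin x' z) ∧
      linLt T y (i x') ∧ T.meet (i x) (i x') = T.meet y (i x') ∧
      (∀ z, T.Leaf z → linLt T z (i x') → T.meet (i x) (i x') = T.meet z (i x') → T.lin z y)))

section Helpers

lemma OTree.meet_eq_left (T : OTree β) {a b : β} (h : T.tle a b) : T.meet a b = a :=
  T.tle_antisymm _ _ (T.meet_le_left a b) (T.le_meet a a b (T.tle_refl a) h)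

lemma OTree.meet_eq_right (T : OTree β) {a b : β} (h : T.tle b a) : T.meet a b = b :=
  T.tle_antisymm _ _ (T.meet_le_right a b) (T.le_meet b a b h (T.tle_refl b))

lemma OTree.exists_leaf (T : OTree β) (v : β) : ∃ w, T.tle v w ∧ T.Leaf w := by
  letI : PartialOrder β :=
    { le := T.lin, le_refl := T.lin_refl, le_trans := T.lin_trans,
      le_antisymm := T.lin_antisymm }
  obtain ⟨a, ha, hmax⟩ := Set.Finite.exists_maximalFor id {w | T.tle v w}
    (Set.toFinite _) ⟨v, T.tle_refl v⟩
  exact ⟨a, ha, fun u hu => T.lin_antisymm _ _ (hmax (T.tle_trans _ _ _ ha hu) (T.tle_lin _ _ hu)) (T.tle_lin _ _ hu)⟩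

lemma morph_tle {S : OTree α} {T : OTree β} {e : α → β} (h : IsMorphism S T e)
    {a b : α} (hab : S.tle a b) : T.tle (e a) (e b) := by
  have h2 : T.meet (e a) (e b) = e a := by rw [← h.1, S.meet_eq_left hab]
  have h3 := T.meet_le_right (e a) (e b)
  rwa [h2] at h3

end Helpers

/-- Transitivity of conjugacy of leaves along embeddings. -/
theorem stmt9 (S : OTree α) (T : OTree β) (V : OTree γ) (i : α → β) (j : β → γ)
    (hi : IsEmbedding S T i) (hj : IsEmbedding T V j)
    (x : α) (y : β) (z : γ)
    (hxy : Conj S T i x y) (hyz : Conj T V j y z) :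
    Conj S V (j ∘ i) x z := by
  obtain ⟨hLx, hLy, hxy⟩ := hxy
  obtain ⟨_, hLz, hyz⟩ := hyz
  refine ⟨hLx, hLz, ?_⟩
  rcases hxy with ⟨hSx, hTy⟩ | ⟨x', hLx', hxx', hxmin, hyix', hmeet, hymax⟩
  · rcases hyz with ⟨_, hVz⟩ | ⟨y', hLy', hyy', _, _, _, _⟩
    · exact Or.inl ⟨hSx, hVz⟩
    · exact absurd (T.lin_antisymm _ _ hyy'.1 (hTy y' hLy')) hyy'.2
  · rcases hyz with ⟨hTy2, hVz⟩ | ⟨y', hLy', hyy', hymin, hzjy', hmeet2, hzmax⟩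
    · exfalso
      obtain ⟨w, hw, hLw⟩ := T.exists_leaf (i x')
      have h1 : T.lin y w := T.lin_trans _ _ _ hyix'.1 (T.tle_lin _ _ hw)
      have h2 : w = y := T.lin_antisymm _ _ (hTy2 w hLw) h1
      have h3 : T.lin (i x') y := T.tle_lin _ _ (h2 ▸ hw)
      exact hyix'.2 (T.lin_antisymm _ _ hyix'.1 h3)
    · -- main case
      have tmy : T.tle (T.meet y (i x')) y := T.meet_le_left y (i x')
      have tmi : T.tle (T.meet y (i x')) (i x') := T.meet_le_right y (i x')
      have hniy : ¬ T.tle y (i x') := fun h => hyix'.2 (hLy _ h).symm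
      have hniy' : ¬ T.tle (i x') y := fun h =>
        hyix'.2 (T.lin_antisymm _ _ hyix'.1 (T.tle_lin _ _ h))
      have hm_ne_y : T.meet y (i x') ≠ y := fun h => hniy (h ▸ tmi)
      have hm_ne_i : T.meet y (i x') ≠ i x' := fun h => hniy' (h ▸ tmy)
      -- every leaf above i x' is strictly lin-above y
      have hW : ∀ w, T.Leaf w → T.tle (i x') w → linLt T y w := by
        intro w hLw hw
        refine ⟨(T.lex_coh y (i x') y w (T.tle_refl y) hw hniy hniy').mpr hyix'.1, ?_⟩
        intro e; exact hniy' (e ▸ hw)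
      -- m ⊑ y'
      have hmy' : T.tle (T.meet y (i x')) y' := by
        by_contra h
        have hy'm : ¬ T.tle y' (T.meet y (i x')) := fun h2 =>
          hyy'.2 (hLy' _ (T.tle_trans _ _ _ h2 tmy))
        have c1 := T.lex_coh y' (T.meet y (i x')) y' y (T.tle_refl y') tmy hy'm h
        have c2 := T.lex_coh y' (T.meet y (i x')) y' (i x') (T.tle_refl y') tmi hy'm h
        have hny'y : ¬ T.lin y' y := fun h2 => hyy'.2 (T.lin_antisymm _ _ hyy'.1 h2)
        have hniy'2 : ¬ T.lin y' (i x') := fun h2 => hny'y (c1.mpr (c2.mp h2))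
        have hlix'y' : T.lin (i x') y' := (T.lin_total (i x') y').resolve_right hniy'2
        obtain ⟨w, hw, hLw⟩ := T.exists_leaf (i x')
        have hni : ¬ T.tle (i x') y' := fun h2 => h (T.tle_trans _ _ _ tmi h2)
        have hni2 : ¬ T.tle y' (i x') := fun h2 => hni (by rw [hLy' _ h2]; exact T.tle_refl y')
        have c3 := T.lex_coh (i x') y' w y' hw (T.tle_refl y') hni hni2
        have hwy' : T.lin w y' := c3.mpr hlix'y'
        have hy'w := hymin w hLw (hW w hLw hw)
        have hwe : w = y' := T.lin_antisymm _ _ hwy' hy'w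
        exact hni (hwe ▸ hw)
      have tny' : T.tle (T.meet y' (i x')) y' := T.meet_le_left y' (i x')
      have tni : T.tle (T.meet y' (i x')) (i x') := T.meet_le_right y' (i x')
      have tmn : T.tle (T.meet y (i x')) (T.meet y' (i x')) :=
        T.le_meet _ _ _ hmy' tmi
      -- m ≠ n
      have hmn : T.meet y (i x') ≠ T.meet y' (i x') := by
        intro h
        have hA : ¬ T.tle y' (i x') := by
          intro h2
          have e : T.meet y' (i x') = y' := T.meet_eq_left h2
          have : T.tle y' y := by
            rw [← e, ← h]; exact tmy
          exact hyy'.2 (hLy' _ this)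
        have hB : ¬ T.tle (i x') y' := by
          intro h2
          have e : T.meet y' (i x') = i x' := T.meet_eq_right h2
          exact hm_ne_i (h.trans e)
        rcases T.lin_total y' (i x') with hl | hl
        · have hne : y' ≠ i x' := fun e => hA (e ▸ T.tle_refl y')
          have := hymax y' hLy' ⟨hl, hne⟩ (by rw [hmeet, h])
          exact hyy'.2 (T.lin_antisymm _ _ hyy'.1 this)
        · obtain ⟨w, hw, hLw⟩ := T.exists_leaf (i x')
          have c3 := T.lex_coh (i x') y' w y' hw (T.tle_refl y') hB hA
          have hwy' : T.lin w y' := c3.mpr hl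
          have hy'w := hymin w hLw (hW w hLw hw)
          have hwe : w = y' := T.lin_antisymm _ _ hwy' hy'w
          exact hB (hwe ▸ hw)
      -- meet y y' = meet y (i x')
      have hm'm : T.meet y y' = T.meet y (i x') := by
        have h1 : T.tle (T.meet y (i x')) (T.meet y y') := T.le_meet _ _ _ tmy hmy'
        rcases T.pred_chain y' (T.meet y y') (T.meet y' (i x'))
            (T.meet_le_right y y') tny' with h | h
        · have h2 : T.tle (T.meet y y') (T.meet y (i x')) :=
            T.le_meet _ _ _ (T.meet_le_left y y') (T.tle_trans _ _ _ h tni)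
          exact T.tle_antisymm _ _ h2 h1
        · exfalso
          have h2 : T.tle (T.meet y' (i x')) (T.meet y (i x')) :=
            T.le_meet _ _ _ (T.tle_trans _ _ _ h (T.meet_le_left y y')) tni
          exact hmn (T.tle_antisymm _ _ tmn h2)
      -- move to V
      have jm := hj.1.1
      have jtle : ∀ {a b : β}, T.tle a b → V.tle (j a) (j b) := fun h => morph_tle hj.1 h
      have hMz : V.meet z (j y') = j (T.meet y (i x')) := by
        rw [← hmeet2, ← jm y y', hm'm]
      have tMN : V.tle (j (T.meet y (i x'))) (j (T.meet y' (i x'))) := jtle tmn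
      have hMN : j (T.meet y (i x')) ≠ j (T.meet y' (i x')) := fun h => hmn (hj.2 h)
      have tNa : V.tle (j (T.meet y' (i x'))) (j (i x')) := jtle tni
      have tNb : V.tle (j (T.meet y' (i x'))) (j y') := jtle tny'
      have tMz : V.tle (j (T.meet y (i x'))) z := hMz ▸ V.meet_le_left z (j y')
      have hNz : ¬ V.tle (j (T.meet y' (i x'))) z := by
        intro h
        have h2 : V.tle (j (T.meet y' (i x'))) (V.meet z (j y')) := V.le_meet _ _ _ h tNb
        rw [hMz] at h2
        exact hMN (V.tle_antisymm _ _ tMN h2)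
      have hzN : ¬ V.tle z (j (T.meet y' (i x'))) := by
        intro h
        exact hNz ((hLz _ h) ▸ V.tle_refl _)
      have hMza : V.meet z (j (i x')) = j (T.meet y (i x')) := by
        rcases V.pred_chain (j (i x')) (V.meet z (j (i x'))) (j (T.meet y' (i x')))
            (V.meet_le_right _ _) tNa with h | h
        · have h1 : V.tle (V.meet z (j (i x'))) (V.meet z (j y')) :=
            V.le_meet _ _ _ (V.meet_le_left _ _) (V.tle_trans _ _ _ h tNb)
          rw [hMz] at h1
          exact V.tle_antisymm _ _ h1
            (V.le_meet _ _ _ tMz (V.tle_trans _ _ _ tMN tNa))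
        · exact absurd (V.tle_trans _ _ _ h (V.meet_le_left _ _)) hNz
      have hza : linLt V z (j (i x')) := by
        have c1 := V.lex_coh z (j (T.meet y' (i x'))) z (j (i x'))
          (V.tle_refl z) tNa hzN hNz
        have c2 := V.lex_coh z (j (T.meet y' (i x'))) z (j y')
          (V.tle_refl z) tNb hzN hNz
        refine ⟨c1.mpr (c2.mp hzjy'.1), ?_⟩
        intro e
        exact hNz (by rw [e]; exact tNa)
      have hMa : V.meet (j (i x)) (j (i x')) = j (T.meet y (i x')) := by
        rw [← jm, hmeet]
      refine Or.inr ⟨x', hLx', hxx', hxmin, hza, ?_, ?_⟩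
      · show V.meet (j (i x)) (j (i x')) = V.meet z (j (i x'))
        rw [hMa, hMza]
      · intro u hLu hua hmu
        have hmeetu : V.meet u (j (i x')) = j (T.meet y (i x')) := by
          have : V.meet (j (i x)) (j (i x')) = V.meet u (j (i x')) := hmu
          rw [← this, hMa]
        have tMu : V.tle (j (T.meet y (i x'))) u := hmeetu ▸ V.meet_le_left _ _
        have hNu : ¬ V.tle (j (T.meet y' (i x'))) u := by
          intro h
          have h2 : V.tle (j (T.meet y' (i x'))) (V.meet u (j (i x'))) :=
            V.le_meet _ _ _ h tNa
          rw [hmeetu] at h2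
          exact hMN (V.tle_antisymm _ _ tMN h2)
        have huN : ¬ V.tle u (j (T.meet y' (i x'))) := by
          intro h
          exact hNu ((hLu _ h) ▸ V.tle_refl _)
        have hub : V.meet u (j y') = j (T.meet y (i x')) := by
          rcases V.pred_chain (j y') (V.meet u (j y')) (j (T.meet y' (i x')))
              (V.meet_le_right _ _) tNb with h | h
          · have h1 : V.tle (V.meet u (j y')) (V.meet u (j (i x'))) :=
              V.le_meet _ _ _ (V.meet_le_left _ _) (V.tle_trans _ _ _ h tNa)
            rw [hmeetu] at h1
            exact V.tle_antisymm _ _ h1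
              (V.le_meet _ _ _ tMu (V.tle_trans _ _ _ tMN tNb))
          · exact absurd (V.tle_trans _ _ _ h (V.meet_le_left _ _)) hNu
        have c1 := V.lex_coh u (j (T.meet y' (i x'))) u (j (i x'))
          (V.tle_refl u) tNa huN hNu
        have c2 := V.lex_coh u (j (T.meet y' (i x'))) u (j y')
          (V.tle_refl u) tNb huN hNu
        have hub2 : linLt V u (j y') := by
          refine ⟨c2.mpr (c1.mp hua.1), ?_⟩
          intro e
          exact hNu (by rw [e]; exact tNb)
        have hMb : V.meet (j y) (j y') = j (T.meet y (i x')) := by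
          rw [← jm, hm'm]
        exact hzmax u hLu hub2 (hMb.trans hub.symm)
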